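/- The range δ(A) is a hereditary subalgebra of A if and only if δ(A) = δ(1)·A·δ(1), i.e. δ(A) equals the set {δ(1)·a·δ(1) : a ∈ A}. -/

import Mathlib

/-- A (not necessarily unital) *-algebra endomorphism of a unital C*-algebra:
a linear, multiplicative, star-preserving map. -/
def IsEndomorphism {A : Type*} [CStarAlgebra A] (δ : A → A) : Prop :=
  IsLinearMap ℂ δ ∧ (∀ a b, δ (a * b) = δ a * δ b) ∧ (∀ a, δ (star a) = star (δ a))

/-- A transfer operator for `(A, δ)`: a continuous positive linear map `δs`
satisfying `δs (δ a * b) = a * δs b`. -/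
def IsTransferOperator {A : Type*} [CStarAlgebra A] [PartialOrder A] [StarOrderedRing A]
    (δ δs : A → A) : Prop :=
  Continuous δs ∧ IsLinearMap ℂ δs ∧ (∀ a, 0 ≤ a → 0 ≤ δs a) ∧
    ∀ a b, δs (δ a * b) = a * δs b

/-- δ(A) is a hereditary subalgebra of A iff δ(A) = δ(1)·A·δ(1). -/
theorem range_hereditary_iff {A : Type*} [CStarAlgebra A] [PartialOrder A]
    [StarOrderedRing A] (δ : A → A) (hδ : IsEndomorphism δ) :
    (∀ a b : A, 0 ≤ a → a ≤ b → b ∈ Set.range δ → a ∈ Set.range δ) ↔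
      Set.range δ = {x : A | ∃ a : A, x = δ 1 * a * δ 1} := by
  obtain ⟨hlin, hmul, hstar⟩ := hδ
  set p := δ 1 with hp
  have hp2 : p * p = p := by rw [hp, ← hmul, one_mul]
  have hps : star p = p := by rw [hp, ← hstar, star_one]
  have hrange : ∀ a, δ a = p * δ a * p := by
    intro a
    conv_lhs => rw [show a = 1 * a * 1 by rw [one_mul, mul_one], hmul, hmul]
  constructor
  · -- hereditary → range = pAp
    intro h
    have pos_case : ∀ a : A, 0 ≤ a → p * a * p ∈ Set.range δ := by
      intro a ha
      have h1 : (0 : A) ≤ p * a * p := by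
        have := star_left_conjugate_nonneg ha p; rwa [hps] at this
      have h2 : a ≤ algebraMap ℝ A ‖a‖ :=
        IsSelfAdjoint.le_algebraMap_norm_self (.of_nonneg ha)
      have h3 : p * a * p ≤ ‖a‖ • p := by
        have := star_left_conjugate_le_conjugate h2 p
        rw [hps] at this
        rwa [Algebra.algebraMap_eq_smul_one, mul_smul_comm, smul_mul_assoc, mul_one,
          hp2] at this
      have h5 : (‖a‖ • p) ∈ Set.range δ := by
        refine ⟨(‖a‖ : ℂ) • 1, ?_⟩
        rw [hlin.map_smul, ← hp, Complex.coe_smul]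
      exact h _ _ h1 h3 h5
    have key : ∀ a : A, p * a * p ∈ Set.range δ := by
      intro a
      have hmem : a ∈ Submodule.span ℂ {a : A | 0 ≤ a} := by
        rw [CStarAlgebra.span_nonneg]; trivial
      induction hmem using Submodule.span_induction with
      | mem x hx => exact pos_case x hx
      | zero => exact ⟨0, by rw [hlin.map_zero]; simp⟩
      | add x y hx hy ihx ihy =>
        obtain ⟨u, hu⟩ := ihx; obtain ⟨v, hv⟩ := ihy
        exact ⟨u + v, by rw [hlin.map_add, hu, hv]; noncomm_ring⟩
      | smul c x hx ih =>
        obtain ⟨u, hu⟩ := ih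
        exact ⟨c • u, by rw [hlin.map_smul, hu, mul_smul_comm, smul_mul_assoc]⟩
    ext x
    simp only [Set.mem_range, Set.mem_setOf_eq]
    constructor
    · rintro ⟨a, rfl⟩; exact ⟨δ a, hrange a⟩
    · rintro ⟨a, rfl⟩; exact key a
  · -- range = pAp → hereditary
    intro h a b ha hab hb
    obtain ⟨c, rfl⟩ := hb
    set q := 1 - p with hq
    have hqs : star q = q := by rw [hq, star_sub, star_one, hps]
    have hqp : q * p = 0 := by rw [hq, sub_mul, one_mul, hp2, sub_self]
    have hpq : p * q = 0 := by rw [hq, mul_sub, mul_one, hp2, sub_self]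
    have hqbq : q * δ c * q = 0 := by
      rw [hrange c, show q * (p * δ c * p) * q = (q * p) * δ c * (p * q) by noncomm_ring,
        hqp, hpq]; simp
    have hqaq : q * a * q = 0 := by
      refine le_antisymm ?_ ?_
      · have := star_left_conjugate_le_conjugate hab q
        rw [hqs] at this
        rwa [hqbq] at this
      · have := star_left_conjugate_nonneg ha q; rwa [hqs] at this
    have has : star a = a := (IsSelfAdjoint.of_nonneg ha).star_eq
    set s := CFC.sqrt a with hsdef
    have hss : s * s = a := CFC.sqrt_mul_sqrt_self a ha
    have hsa : star s = s := (IsSelfAdjoint.of_nonneg (CFC.sqrt_nonneg a)).star_eq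
    have hsq : s * q = 0 := by
      rw [← CStarRing.star_mul_self_eq_zero_iff (s * q), star_mul, hqs, hsa,
        show q * s * (s * q) = q * (s * s) * q by noncomm_ring, hss, hqaq]
    have haq : a * q = 0 := by
      rw [← hss, mul_assoc, hsq, mul_zero]
    have hqa : q * a = 0 := by
      have := congrArg star haq
      rwa [star_mul, hqs, has, star_zero] at this
    have hap : a * p = a := by
      have : a * (1 - p) = 0 := haq
      rw [mul_sub, mul_one, sub_eq_zero] at this
      exact this.symm
    have hpa : p * a = a := by
      have : (1 - p) * a = 0 := hqa
      rw [sub_mul, one_mul, sub_eq_zero] at this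
      exact this.symm
    rw [h]
    exact ⟨a, by rw [hpa, hap]⟩
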